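/- Let F : ℝ × [0,1] → ℝ × [0,1] be a homeomorphism commuting with the translation T(x,y) = (x+1,y), and let X ⊆ ℝ × [0,1] be a closed T-invariant and F-invariant set. If a sequence (z_n) in X satisfies that (pr₁(Fⁿ(z_n)) − pr₁(z_n))/n converges to a limit L, then L lies in the closed interval [ρ_inf, ρ_sup], where ρ_inf and ρ_sup are the infimum and supremum over z ∈ X of liminf_{n→∞}(pr₁(Fⁿ(z)) − pr₁(z))/n and limsup_{n→∞}(pr₁(Fⁿ(z)) − pr₁(z))/n respectively. -/

import Mathlib

open Filter Topology

/-- The lifted annulus `𝒜 = ℝ × [0,1]`. -/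
abbrev 𝒜 : Type := ℝ × (Set.Icc (0:ℝ) 1)

/-- The deck translation `T(x,y) = (x+1,y)`. -/
def T : 𝒜 → 𝒜 := fun z => (z.1 + 1, z.2)

/-- `limsup` of the negation of a real sequence is the negation of the `liminf`. -/
lemma limsup_neg_real (u : ℕ → ℝ) :
    limsup (fun n => -(u n)) atTop = - liminf u atTop := by
  rw [limsup_eq, liminf_eq, Real.sInf_def]
  congr 1
  congr 1
  ext a
  simp only [Set.mem_neg, Set.mem_setOf_eq]
  constructor
  · intro h; filter_upwards [h] with n hn; linarith
  · intro h; filter_upwards [h] with n hn; linarith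

/-- Abstract chaining lemma: if `G` is a continuous additive cocycle over `Φ`,
`Φ` preserves `X`, every point of `X` reduces to the compact set `K` without
changing the cocycle, `G 1` is bounded on `X`, and every point of `K` has
`limsup Gₙ/n ≤ ρ`, then any limit `L` of `G n (z n) / n` with `z n ∈ X`
satisfies `L ≤ ρ`. -/
lemma key {Φ : 𝒜 → 𝒜} {X K : Set 𝒜} (hK : IsCompact K)
    (hKX : K ⊆ X) (hΦX : ∀ w ∈ X, Φ w ∈ X)
    (G : ℕ → 𝒜 → ℝ) (hGcont : ∀ n, Continuous (G n))
    (hco : ∀ m n w, G (m + n) w = G m w + G n (Φ^[m] w))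
    (hred : ∀ w ∈ X, ∃ v ∈ K, ∀ n, G n v = G n w)
    {C : ℝ} (hC0 : 0 ≤ C) (hC : ∀ w ∈ X, |G 1 w| ≤ C)
    {ρ : ℝ} (hρ : ∀ w ∈ K, limsup (fun n : ℕ => G n w / n) atTop ≤ ρ)
    (z : ℕ → 𝒜) (hz : ∀ n, z n ∈ X) {L : ℝ}
    (hL : Tendsto (fun n : ℕ => G n (z n) / n) atTop (𝓝 L)) : L ≤ ρ := by
  -- G 0 = 0
  have hG0 : ∀ w, G 0 w = 0 := by
    intro w
    have h := hco 0 0 w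
    simp only [Function.iterate_zero, id_eq] at h
    linarith
  -- iterates of Φ preserve X
  have hΦit : ∀ n, ∀ w ∈ X, Φ^[n] w ∈ X := by
    intro n
    induction n with
    | zero => intro w hw; simpa using hw
    | succ n ih =>
      intro w hw
      rw [Function.iterate_succ_apply']
      exact hΦX _ (ih w hw)
  -- uniform bound |G n w| ≤ n C on X
  have hbound : ∀ n, ∀ w ∈ X, |G n w| ≤ n * C := by
    intro n
    induction n with
    | zero => intro w hw; simp [hG0]
    | succ n ih =>
      intro w hw
      have h := hco n 1 w
      have h1 : |G 1 (Φ^[n] w)| ≤ C := hC _ (hΦit n w hw)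
      have h2 := ih w hw
      have habs : |G (n + 1) w| ≤ |G n w| + |G 1 (Φ^[n] w)| := by
        rw [h]; exact abs_add_le _ _
      push_cast
      calc |G (n + 1) w| ≤ |G n w| + |G 1 (Φ^[n] w)| := habs
        _ ≤ n * C + C := add_le_add h2 h1
        _ = (n + 1) * C := by ring
  -- main estimate for each ε > 0
  have main : ∀ ε : ℝ, 0 < ε → L ≤ ρ + ε := by
    intro ε hε
    -- each point of K has some good time n ≥ 1
    have hgood : ∀ w ∈ K, ∃ n : ℕ, 1 ≤ n ∧ G n w < n * (ρ + ε) := by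
      intro w hw
      have hb : IsBoundedUnder (· ≤ ·) atTop (fun n : ℕ => G n w / n) := by
        refine isBoundedUnder_of ⟨C, fun n => ?_⟩
        rcases Nat.eq_zero_or_pos n with h0 | h1
        · simp [h0, hG0, hC0]
        · have hn : (0:ℝ) < n := by exact_mod_cast h1
          have := hbound n w (hKX hw)
          rw [div_le_iff₀ hn]
          nlinarith [le_abs_self (G n w)]
      have hlt : limsup (fun n : ℕ => G n w / n) atTop < ρ + ε :=
        lt_of_le_of_lt (hρ w hw) (by linarith)
      have hev := eventually_lt_of_limsup_lt hlt hb
      rcases (hev.and (eventually_ge_atTop 1)).exists with ⟨n, hn1, hn2⟩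
      refine ⟨n, hn2, ?_⟩
      have hn : (0:ℝ) < n := by exact_mod_cast hn2
      calc G n w = (G n w / n) * n := by field_simp
        _ < (ρ + ε) * n := by exact mul_lt_mul_of_pos_right hn1 hn
        _ = n * (ρ + ε) := by ring
    -- compactness: a uniform bound M on the good times
    set U : ℕ → Set 𝒜 := fun n => {w | G n w < n * (ρ + ε)} with hU
    have hUopen : ∀ n, IsOpen (U n) :=
      fun n => isOpen_lt (hGcont n) continuous_const
    have hcover : K ⊆ ⋃ n, U n := by
      intro w hw
      rcases hgood w hw with ⟨n, _, hn⟩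
      exact Set.mem_iUnion.2 ⟨n, hn⟩
    rcases hK.elim_finite_subcover U hUopen hcover with ⟨t, ht⟩
    set M : ℕ := max (t.sup id) 1 with hM
    have hM1 : 1 ≤ M := le_max_right _ _
    have hgoodM : ∀ w ∈ K, ∃ n, 1 ≤ n ∧ n ≤ M ∧ G n w < n * (ρ + ε) := by
      intro w hw
      rcases Set.mem_iUnion₂.1 (ht hw) with ⟨n, hnt, hn⟩
      have hn1 : 1 ≤ n := by
        rcases Nat.eq_zero_or_pos n with h0 | h1
        · exfalso
          have : G 0 w < 0 := by simpa [hU, h0] using hn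
          rw [hG0] at this; linarith
        · exact h1
      exact ⟨n, hn1, le_trans (Finset.le_sup (f := id) hnt) (le_max_left _ _), hn⟩
    -- chaining estimate
    set B : ℝ := M * C + M * (|ρ| + ε) with hB
    have chain : ∀ n : ℕ, ∀ w ∈ K, G n w ≤ n * (ρ + ε) + B := by
      intro n
      induction n using Nat.strong_induction_on with
      | _ n IH =>
        intro w hw
        by_cases hnM : n ≤ M
        · have h1 := hbound n w (hKX hw)
          have h2 : G n w ≤ n * C := le_trans (le_abs_self _) h1
          have hnM' : (n:ℝ) ≤ M := by exact_mod_cast hnM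
          have hn0 : (0:ℝ) ≤ n := Nat.cast_nonneg n
          have hM0 : (0:ℝ) ≤ M := Nat.cast_nonneg M
          have hx1 : (0:ℝ) ≤ ((M:ℝ) - n) * (|ρ| + ε) :=
            mul_nonneg (by linarith) (by positivity)
          have hx2 : (0:ℝ) ≤ (n:ℝ) * ((ρ + ε) + (|ρ| + ε)) :=
            mul_nonneg hn0 (by nlinarith [neg_abs_le ρ])
          have hx3 : (0:ℝ) ≤ ((M:ℝ) - n) * C := mul_nonneg (by linarith) hC0
          rw [hB]
          nlinarith
        · push_neg at hnM
          rcases hgoodM w hw with ⟨n₁, hn₁1, hn₁M, hlt⟩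
          have hn₁n : n₁ < n := lt_of_le_of_lt hn₁M hnM
          set m : ℕ := n - n₁ with hm
          have hnm : n = n₁ + m := by omega
          have hmn : m < n := by omega
          rcases hred (Φ^[n₁] w) (hΦit n₁ w (hKX hw)) with ⟨v, hvK, hv⟩
          have hIH := IH m hmn v hvK
          have heq : G n w = G n₁ w + G m v := by
            rw [hnm, hco n₁ m w, hv m]
          have hcast : (n:ℝ) = (n₁:ℝ) + (m:ℝ) := by
            rw [hnm]; push_cast; ring
          rw [heq, hcast]
          nlinarith
    -- conclude L ≤ ρ + ε
    have htend : Tendsto (fun n : ℕ => (ρ + ε) + B / n) atTop (𝓝 ((ρ + ε) + 0)) :=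
      tendsto_const_nhds.add (tendsto_const_div_atTop_nhds_zero_nat B)
    rw [add_zero] at htend
    have hle : ∀ᶠ n in atTop, G n (z n) / n ≤ (ρ + ε) + B / n := by
      filter_upwards [eventually_ge_atTop 1] with n hn1
      have hn : (0:ℝ) < n := by exact_mod_cast hn1
      rcases hred (z n) (hz n) with ⟨v, hvK, hv⟩
      have h1 : G n (z n) ≤ n * (ρ + ε) + B := by
        rw [← hv n]; exact chain n v hvK
      rw [div_le_iff₀ hn]
      have : ((ρ + ε) + B / n) * n = n * (ρ + ε) + B := by
        field_simp
      rw [this]; exact h1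
    exact le_of_tendsto_of_tendsto hL htend hle
  by_contra hcon
  push_neg at hcon
  have := main ((L - ρ) / 2) (by linarith)
  linarith

/-- If `F` is a homeomorphism of `ℝ × [0,1]` commuting with the translation `T`,
`X` is a closed `T`- and `F`-invariant set (compact modulo `T`), and a sequence
`(z_n)` in `X` satisfies that `(pr₁(Fⁿ(z_n)) − pr₁(z_n))/n → L`, then `L` lies in
`[ρ_inf, ρ_sup]`, the interval between the infimum of the pointwise liminfs and the
supremum of the pointwise limsups over `X`. -/
theorem stmt_1 (F : 𝒜 ≃ₜ 𝒜) (hFT : ∀ z, F (T z) = T (F z))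
    (X : Set 𝒜) (hXcl : IsClosed X) (hXT : T '' X = X) (hXF : F '' X = X)
    (hXc : IsCompact {z ∈ X | z.1 ∈ Set.Icc (0:ℝ) 1})
    (z : ℕ → 𝒜) (hz : ∀ n, z n ∈ X) (L : ℝ)
    (hL : Tendsto (fun n : ℕ => (((⇑F)^[n] (z n)).1 - (z n).1) / (n:ℝ)) atTop (𝓝 L)) :
    sInf {r | ∃ w ∈ X, r = liminf (fun n : ℕ => (((⇑F)^[n] w).1 - w.1) / (n:ℝ)) atTop} ≤ L ∧
    L ≤ sSup {r | ∃ w ∈ X, r = limsup (fun n : ℕ => (((⇑F)^[n] w).1 - w.1) / (n:ℝ)) atTop} := by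
  set K : Set 𝒜 := {z ∈ X | z.1 ∈ Set.Icc (0:ℝ) 1} with hKdef
  have hKX : K ⊆ X := fun w hw => hw.1
  -- basic invariance facts
  have hT1 : ∀ w ∈ X, T w ∈ X := fun w hw => hXT ▸ ⟨w, hw, rfl⟩
  have hT2 : ∀ w ∈ X, ((w.1 - 1, w.2) : 𝒜) ∈ X := by
    intro w hw
    rw [← hXT] at hw
    rcases hw with ⟨v, hv, hvw⟩
    subst hvw
    have heq : (((T v).1 - 1, (T v).2) : 𝒜) = v := by
      apply Prod.ext <;> simp [T]
    rwa [heq]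
  have hFT' : ∀ w : 𝒜, F ((w.1 - 1, w.2) : 𝒜) = ((F w).1 - 1, (F w).2) := by
    intro w
    have hTw : T ((w.1 - 1, w.2) : 𝒜) = w := by
      apply Prod.ext <;> simp [T]
    have h := hFT ((w.1 - 1, w.2) : 𝒜)
    rw [hTw] at h
    rw [h]
    apply Prod.ext <;> simp [T]
  -- integer translations commute with F
  have eF : ∀ m : ℤ, ∀ w : 𝒜, F ((w.1 + m, w.2) : 𝒜) = ((F w).1 + m, (F w).2) := by
    intro m
    induction m using Int.induction_on with
    | zero => intro w; simp
    | succ m ih =>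
      intro w
      have h1 : ((w.1 + ((m:ℤ) + 1 : ℤ), w.2) : 𝒜) = T ((w.1 + (m:ℤ), w.2) : 𝒜) := by
        apply Prod.ext <;> simp [T]; push_cast; ring
      rw [h1, hFT, ih, T]
      apply Prod.ext <;> simp; push_cast; ring
    | pred m ih =>
      intro w
      have h1 : ((w.1 + (-(m:ℤ) - 1 : ℤ), w.2) : 𝒜)
          = ((((w.1 + (-(m:ℤ) : ℤ), w.2) : 𝒜)).1 - 1, (((w.1 + (-(m:ℤ) : ℤ), w.2) : 𝒜)).2) := by
        apply Prod.ext <;> simp; push_cast; ring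
      rw [h1, hFT', ih]
      apply Prod.ext <;> simp; push_cast; ring
  have eFiter : ∀ n : ℕ, ∀ m : ℤ, ∀ w : 𝒜,
      (⇑F)^[n] ((w.1 + m, w.2) : 𝒜) = (((⇑F)^[n] w).1 + m, ((⇑F)^[n] w).2) := by
    intro n
    induction n with
    | zero => intro m w; simp
    | succ n ih =>
      intro m w
      rw [Function.iterate_succ_apply', ih, eF, Function.iterate_succ_apply']
  have eX : ∀ m : ℤ, ∀ w ∈ X, ((w.1 + m, w.2) : 𝒜) ∈ X := by
    intro m
    induction m using Int.induction_on with
    | zero => intro w hw; simpa using hw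
    | succ m ih =>
      intro w hw
      have h1 : ((w.1 + ((m:ℤ) + 1 : ℤ), w.2) : 𝒜) = T ((w.1 + (m:ℤ), w.2) : 𝒜) := by
        apply Prod.ext <;> simp [T]; push_cast; ring
      rw [h1]
      exact hT1 _ (ih w hw)
    | pred m ih =>
      intro w hw
      have h1 : ((w.1 + (-(m:ℤ) - 1 : ℤ), w.2) : 𝒜)
          = ((((w.1 + (-(m:ℤ) : ℤ), w.2) : 𝒜)).1 - 1, (((w.1 + (-(m:ℤ) : ℤ), w.2) : 𝒜)).2) := by
        apply Prod.ext <;> simp; push_cast; ring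
      rw [h1]
      exact hT2 _ (ih w hw)
  -- reduction to the fundamental domain
  have hred : ∀ w ∈ X, ∃ v ∈ K, ∀ n : ℕ,
      (((⇑F)^[n] v).1 - v.1) = (((⇑F)^[n] w).1 - w.1) := by
    intro w hw
    refine ⟨((w.1 + (-⌊w.1⌋ : ℤ), w.2) : 𝒜), ⟨eX _ w hw, ?_, ?_⟩, ?_⟩
    · show (0:ℝ) ≤ w.1 + ((-⌊w.1⌋ : ℤ) : ℝ)
      push_cast
      linarith [Int.floor_le w.1]
    · show w.1 + ((-⌊w.1⌋ : ℤ) : ℝ) ≤ 1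
      push_cast
      linarith [Int.lt_floor_add_one w.1]
    · intro n
      rw [eFiter]
      simp
  have hΦX : ∀ w ∈ X, F w ∈ X := fun w hw => hXF ▸ ⟨w, hw, rfl⟩
  have hGcont : ∀ n : ℕ, Continuous (fun w : 𝒜 => ((⇑F)^[n] w).1 - w.1) :=
    fun n => (continuous_fst.comp (F.continuous.iterate n)).sub continuous_fst
  have hco : ∀ (m n : ℕ) (w : 𝒜), ((⇑F)^[m + n] w).1 - w.1
      = (((⇑F)^[m] w).1 - w.1) + (((⇑F)^[n] ((⇑F)^[m] w)).1 - ((⇑F)^[m] w).1) := by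
    intro m n w
    rw [add_comm m n, Function.iterate_add_apply]
    ring
  -- the constant C
  obtain ⟨v₀, hv₀K, -⟩ := hred (z 0) (hz 0)
  obtain ⟨x₀, hx₀K, hx₀⟩ := hXc.exists_isMaxOn ⟨v₀, hv₀K⟩
    ((continuous_fst.comp F.continuous).sub continuous_fst).abs.continuousOn
  set C : ℝ := |(F x₀).1 - x₀.1| with hCdef
  have hC0 : 0 ≤ C := abs_nonneg _
  have hC : ∀ w ∈ X, |((⇑F)^[1] w).1 - w.1| ≤ C := by
    intro w hw
    rcases hred w hw with ⟨v, hvK, hv⟩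
    rw [← hv 1]
    simpa using hx₀ hvK
  -- uniform linear bound on X
  have hΦit : ∀ n : ℕ, ∀ w ∈ X, (⇑F)^[n] w ∈ X := by
    intro n
    induction n with
    | zero => intro w hw; simpa using hw
    | succ n ih =>
      intro w hw
      rw [Function.iterate_succ_apply']
      exact hΦX _ (ih w hw)
  have hbound : ∀ n : ℕ, ∀ w ∈ X, |((⇑F)^[n] w).1 - w.1| ≤ n * C := by
    intro n
    induction n with
    | zero => intro w hw; simp
    | succ n ih =>
      intro w hw
      have h := hco n 1 w
      have h1 : |((⇑F)^[1] ((⇑F)^[n] w)).1 - ((⇑F)^[n] w).1| ≤ C := hC _ (hΦit n w hw)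
      have h2 := ih w hw
      push_cast
      calc |((⇑F)^[n+1] w).1 - w.1|
          ≤ |((⇑F)^[n] w).1 - w.1| + |((⇑F)^[1] ((⇑F)^[n] w)).1 - ((⇑F)^[n] w).1| := by
            rw [h]; exact abs_add_le _ _
        _ ≤ n * C + C := add_le_add h2 h1
        _ = (n + 1) * C := by ring
  have habs : ∀ w ∈ X, ∀ n : ℕ, |(((⇑F)^[n] w).1 - w.1) / (n:ℝ)| ≤ C := by
    intro w hw n
    rcases Nat.eq_zero_or_pos n with h0 | h1
    · simp [h0, hC0]
    · have hn : (0:ℝ) < n := by exact_mod_cast h1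
      rw [abs_div, abs_of_pos hn, div_le_iff₀ hn]
      calc |((⇑F)^[n] w).1 - w.1| ≤ n * C := hbound n w hw
        _ = C * n := by ring
  -- boundedness of the two sets
  set S : Set ℝ :=
    {r | ∃ w ∈ X, r = limsup (fun n : ℕ => (((⇑F)^[n] w).1 - w.1) / (n:ℝ)) atTop} with hSdef
  set I : Set ℝ :=
    {r | ∃ w ∈ X, r = liminf (fun n : ℕ => (((⇑F)^[n] w).1 - w.1) / (n:ℝ)) atTop} with hIdef
  have hSbdd : BddAbove S := by
    refine ⟨C, fun r hr => ?_⟩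
    rcases hr with ⟨w, hw, rfl⟩
    have hb : IsBoundedUnder (· ≥ ·) atTop (fun n : ℕ => (((⇑F)^[n] w).1 - w.1) / (n:ℝ)) :=
      isBoundedUnder_of ⟨-C, fun n => neg_le_of_abs_le (habs w hw n)⟩
    exact limsup_le_of_le hb.isCoboundedUnder_le
      (Eventually.of_forall fun n => le_of_abs_le (habs w hw n))
  have hIbdd : BddBelow I := by
    refine ⟨-C, fun r hr => ?_⟩
    rcases hr with ⟨w, hw, rfl⟩
    have hb : IsBoundedUnder (· ≤ ·) atTop (fun n : ℕ => (((⇑F)^[n] w).1 - w.1) / (n:ℝ)) :=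
      isBoundedUnder_of ⟨C, fun n => le_of_abs_le (habs w hw n)⟩
    exact le_liminf_of_le hb.isCoboundedUnder_ge
      (Eventually.of_forall fun n => neg_le_of_abs_le (habs w hw n))
  constructor
  · -- lower bound, via the negated cocycle
    have hneg : -L ≤ -sInf I := by
      refine key hXc hKX hΦX (fun n w => -(((⇑F)^[n] w).1 - w.1))
        (fun n => (hGcont n).neg) (fun m n w => by rw [hco m n w]; ring)
        (fun w hw => ?_) hC0 (fun w hw => by rw [abs_neg]; exact hC w hw)
        (fun w hw => ?_) z hz ?_
      · rcases hred w hw with ⟨v, hvK, hv⟩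
        exact ⟨v, hvK, fun n => by rw [hv n]⟩
      · have heq : (fun n : ℕ => -(((⇑F)^[n] w).1 - w.1) / (n:ℝ))
            = fun n : ℕ => -((((⇑F)^[n] w).1 - w.1) / (n:ℝ)) := by
          funext n; rw [neg_div]
        rw [heq, limsup_neg_real]
        have : sInf I ≤ liminf (fun n : ℕ => (((⇑F)^[n] w).1 - w.1) / (n:ℝ)) atTop :=
          csInf_le hIbdd ⟨w, hKX hw, rfl⟩
        linarith
      · have heq : (fun n : ℕ => -(((⇑F)^[n] (z n)).1 - (z n).1) / (n:ℝ))
            = fun n : ℕ => -((((⇑F)^[n] (z n)).1 - (z n).1) / (n:ℝ)) := by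
          funext n; rw [neg_div]
        rw [heq]
        exact hL.neg
    linarith
  · -- upper bound
    exact key hXc hKX hΦX (fun n w => ((⇑F)^[n] w).1 - w.1) hGcont hco hred hC0 hC
      (fun w hw => le_csSup hSbdd ⟨w, hKX hw, rfl⟩) z hz hL
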